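/- arXiv:1002.3055 — 3 statements merged into one kernel-verified Lean document; each statement's English description precedes it below -/
import Mathlib

section
/- Let b(x) = (x/(2+x²))(δ + 2/log(2+x²)) for a constant δ ∈ ℝ. Then every bounded function u ∈ C²(ℝ) satisfying (1/2)u'' + b u' = 0 on ℝ is constant if and only if δ < 1/2. -/
open Real Filter


noncomputable def Bf (δ : ℝ) (x : ℝ) : ℝ :=
  (δ/2) * Real.log (2 + x^2) + Real.log (Real.log (2 + x^2))
noncomputable def gf (δ : ℝ) (x : ℝ) : ℝ := Real.exp (-2 * Bf δ x)
lemma hP (x : ℝ) : (0:ℝ) < 2 + x^2 := by positivity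
lemma hP1 (x : ℝ) : (1:ℝ) < 2 + x^2 := by nlinarith [sq_nonneg x]
lemma hL (x : ℝ) : 0 < Real.log (2 + x^2) := Real.log_pos (hP1 x)
lemma hL2 (x : ℝ) : Real.log 2 ≤ Real.log (2 + x^2) :=
  Real.log_le_log (by norm_num) (by nlinarith [sq_nonneg x])

-- upper bound gf ≤ (log 2)^2 ⁻¹ for δ ≥ 0
lemma g_le_const (δ : ℝ) (hδ : 0 ≤ δ) (t : ℝ) : gf δ t ≤ ((Real.log 2)^2)⁻¹ := by
  set L := Real.log (2 + t^2) with hLdef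
  have hL0 : 0 < L := hL t
  have h1 : gf δ t ≤ Real.exp (-2 * Real.log L) := by
    unfold gf Bf
    apply Real.exp_le_exp.mpr
    rw [← hLdef]
    nlinarith
  have h2 : Real.exp (-2 * Real.log L) = (L^2)⁻¹ := by
    rw [show (-2 : ℝ) * Real.log L = -(2 * Real.log L) by ring, Real.exp_neg,
      show (2:ℝ) * Real.log L = (2:ℕ) * Real.log L by norm_num,
      Real.exp_nat_mul, Real.exp_log hL0]
  have h3 : (L^2)⁻¹ ≤ ((Real.log 2)^2)⁻¹ := by
    apply inv_anti₀ (by positivity)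
    have := hL2 t
    nlinarith [Real.log_pos (show (1:ℝ)<2 by norm_num)]
  linarith [h2 ▸ h1]

-- derivative of ψ = -(L)⁻¹
lemma hasDerivAt_psi (t : ℝ) :
    HasDerivAt (fun t : ℝ => -(Real.log (2 + t^2))⁻¹)
      ((2*t / (2 + t^2)) * ((Real.log (2 + t^2))^2)⁻¹) t := by
  have hL' : HasDerivAt (fun x : ℝ => Real.log (2 + x^2)) (2*t / (2 + t^2)) t := by
    have h : HasDerivAt (fun x : ℝ => 2 + x^2) (2*t) t := by
      simpa using ((hasDerivAt_pow 2 t).const_add 2)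
    simpa using h.log (ne_of_gt (hP t))
  have := (hL'.inv (hL t).ne').neg
  refine this.congr_deriv ?_
  field_simp

-- pointwise bound for t ≥ 2, δ ≥ 1/2
lemma g_le_psi' (δ : ℝ) (hδ : 1/2 ≤ δ) (t : ℝ) (ht : 2 ≤ t) :
    gf δ t ≤ (2*t / (2 + t^2)) * ((Real.log (2 + t^2))^2)⁻¹ := by
  set L := Real.log (2 + t^2) with hLdef
  have hL0 : 0 < L := hL t
  have h1 : gf δ t ≤ Real.exp (-(1/2) * L) * (L^2)⁻¹ := by
    unfold gf Bf
    rw [← hLdef]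
    have : -2 * ((δ/2) * L + Real.log L) = (-δ * L) + (-(2 * Real.log L)) := by ring
    rw [this, Real.exp_add]
    have e2 : Real.exp (-(2 * Real.log L)) = (L^2)⁻¹ := by
      rw [Real.exp_neg, show (2:ℝ) * Real.log L = (2:ℕ) * Real.log L by norm_num,
        Real.exp_nat_mul, Real.exp_log hL0]
    rw [e2]
    apply mul_le_mul_of_nonneg_right _ (by positivity)
    apply Real.exp_le_exp.mpr
    nlinarith
  have h2 : Real.exp (-(1/2) * L) ≤ 2*t / (2 + t^2) := by
    set E := Real.exp (-(1/2) * L) with hE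
    have hEpos : 0 < E := Real.exp_pos _
    have hEsq : E^2 = (2 + t^2)⁻¹ := by
      rw [hE, ← Real.exp_nat_mul]
      have : ((2:ℕ):ℝ) * (-(1/2) * L) = -L := by push_cast; ring
      rw [this, Real.exp_neg, Real.exp_log (hP t)]
    have hm : 0 < 2*t / (2 + t^2) := by positivity
    have hEP : E^2 * (2 + t^2) = 1 := by
      rw [hEsq]; field_simp
    have hmP : (2*t / (2 + t^2)) * (2 + t^2) = 2*t := by field_simp
    have hm2 : (2*t / (2 + t^2))^2 * (2 + t^2)^2 = 4*t^2 := by field_simp; ring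
    have hsq : E^2 ≤ (2*t / (2 + t^2))^2 := by nlinarith [hP t, mul_pos (hP t) (hP t)]
    calc E = Real.sqrt (E^2) := (Real.sqrt_sq hEpos.le).symm
    _ ≤ Real.sqrt ((2*t / (2 + t^2))^2) := Real.sqrt_le_sqrt hsq
    _ = 2*t / (2 + t^2) := Real.sqrt_sq hm.le
  calc gf δ t ≤ Real.exp (-(1/2) * L) * (L^2)⁻¹ := h1
  _ ≤ (2*t / (2 + t^2)) * (L^2)⁻¹ := by
      apply mul_le_mul_of_nonneg_right h2 (by positivity)

lemma contDiff_L : ContDiff ℝ 2 (fun x : ℝ => Real.log (2 + x^2)) :=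
  (contDiff_const.add (contDiff_id.pow 2)).log (fun x => (hP x).ne')

lemma contDiff_B (δ : ℝ) : ContDiff ℝ 2 (Bf δ) :=
  (contDiff_const.mul contDiff_L).add (contDiff_L.log (fun x => (hL x).ne'))

lemma contDiff_g (δ : ℝ) : ContDiff ℝ 2 (gf δ) :=
  (contDiff_const.mul (contDiff_B δ)).exp

lemma cont_psi' : Continuous (fun t : ℝ => (2*t / (2 + t^2)) * ((Real.log (2 + t^2))^2)⁻¹) := by
  apply Continuous.mul
  · exact (continuous_const.mul continuous_id).div (by continuity) (fun t => (hP t).ne')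
  · exact ((contDiff_L.continuous).pow 2).inv₀ (fun t => pow_ne_zero 2 (hL t).ne')

lemma integral_g_le (δ : ℝ) (hδ : 1/2 ≤ δ) (x : ℝ) (hx : 0 ≤ x) :
    ∫ t in (0:ℝ)..x, gf δ t ≤ 2*((Real.log 2)^2)⁻¹ + (Real.log 2)⁻¹ := by
  have hδ0 : (0:ℝ) ≤ δ := by linarith
  have hgc : Continuous (gf δ) := (contDiff_g δ).continuous
  have hgint : ∀ a b : ℝ, IntervalIntegrable (gf δ) MeasureTheory.volume a b :=
    fun a b => hgc.intervalIntegrable a b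
  have hlog2 : (0:ℝ) < Real.log 2 := Real.log_pos (by norm_num)
  have hsmall : ∀ y : ℝ, 0 ≤ y → y ≤ 2 → ∫ t in (0:ℝ)..y, gf δ t ≤ 2*((Real.log 2)^2)⁻¹ := by
    intro y hy0 hy2
    calc ∫ t in (0:ℝ)..y, gf δ t ≤ ∫ _t in (0:ℝ)..y, ((Real.log 2)^2)⁻¹ :=
          intervalIntegral.integral_mono_on hy0 (hgint 0 y)
            intervalIntegrable_const (fun t _ => g_le_const δ hδ0 t)
    _ = y * ((Real.log 2)^2)⁻¹ := by rw [intervalIntegral.integral_const]; simp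
    _ ≤ 2*((Real.log 2)^2)⁻¹ := by
        apply mul_le_mul_of_nonneg_right hy2 (by positivity)
  rcases le_or_gt x 2 with hx2 | hx2
  · have := hsmall x hx hx2
    have : (0:ℝ) ≤ (Real.log 2)⁻¹ := by positivity
    linarith [hsmall x hx hx2]
  · have hsplit : ∫ t in (0:ℝ)..x, gf δ t =
        (∫ t in (0:ℝ)..2, gf δ t) + ∫ t in (2:ℝ)..x, gf δ t :=
      (intervalIntegral.integral_add_adjacent_intervals (hgint 0 2) (hgint 2 x)).symm
    have h1 : ∫ t in (0:ℝ)..2, gf δ t ≤ 2*((Real.log 2)^2)⁻¹ := hsmall 2 (by norm_num) le_rfl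
    have hftc : ∫ t in (2:ℝ)..x, (2*t / (2 + t^2)) * ((Real.log (2 + t^2))^2)⁻¹ =
        (-(Real.log (2 + x^2))⁻¹) - (-(Real.log (2 + (2:ℝ)^2))⁻¹) :=
      intervalIntegral.integral_eq_sub_of_hasDerivAt (fun t _ => hasDerivAt_psi t)
        (cont_psi'.intervalIntegrable 2 x)
    have h2 : ∫ t in (2:ℝ)..x, gf δ t ≤ (Real.log 2)⁻¹ := by
      calc ∫ t in (2:ℝ)..x, gf δ t
          ≤ ∫ t in (2:ℝ)..x, (2*t / (2 + t^2)) * ((Real.log (2 + t^2))^2)⁻¹ :=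
            intervalIntegral.integral_mono_on hx2.le (hgint 2 x)
              (cont_psi'.intervalIntegrable 2 x) (fun t ht => g_le_psi' δ hδ t ht.1)
      _ = (-(Real.log (2 + x^2))⁻¹) - (-(Real.log (2 + (2:ℝ)^2))⁻¹) := hftc
      _ ≤ (Real.log (2 + (2:ℝ)^2))⁻¹ := by
        have : (0:ℝ) < (Real.log (2 + x^2))⁻¹ := inv_pos.mpr (hL x)
        linarith
      _ ≤ (Real.log 2)⁻¹ := inv_anti₀ hlog2 (hL2 2)
    linarith [hsplit ▸ (by linarith : (∫ t in (0:ℝ)..2, gf δ t) + (∫ t in (2:ℝ)..x, gf δ t) ≤ 2*((Real.log 2)^2)⁻¹ + (Real.log 2)⁻¹)]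

lemma hasDerivAt_L (x : ℝ) :
    HasDerivAt (fun x : ℝ => Real.log (2 + x^2)) (2*x / (2 + x^2)) x := by
  have h : HasDerivAt (fun x : ℝ => 2 + x^2) (2*x) x := by
    simpa using ((hasDerivAt_pow 2 x).const_add 2)
  simpa using h.log (ne_of_gt (hP x))

lemma hasDerivAt_B (δ x : ℝ) :
    HasDerivAt (Bf δ) ((x / (2 + x^2)) * (δ + 2 / Real.log (2 + x^2))) x := by
  have h1 := (hasDerivAt_L x).const_mul (δ/2)
  have h2 := (hasDerivAt_L x).log (ne_of_gt (hL x))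
  have := h1.add h2
  refine this.congr_deriv ?_
  have h3 := (hP x).ne'
  have h4 := (hL x).ne'
  field_simp

lemma hasDerivAt_g (δ x : ℝ) :
    HasDerivAt (gf δ) (-2 * ((x / (2 + x^2)) * (δ + 2 / Real.log (2 + x^2))) * gf δ x) x := by
  have := ((hasDerivAt_B δ x).const_mul (-2)).exp
  have heq : gf δ = fun x => Real.exp (-2 * Bf δ x) := rfl
  rw [heq]
  convert this using 1
  simp [gf]; ring

lemma g_pos (δ x : ℝ) : 0 < gf δ x := Real.exp_pos _


lemma step1 (β : ℝ) (hβ : 0 < β) :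
    ∀ᶠ s : ℝ in atTop, 2*Real.log 3 + Real.log 2 + 2 * Real.log s ≤ β * s := by
  have h1 : ∀ᶠ s : ℝ in atTop, ‖Real.log s‖ ≤ (β/4) * ‖s‖ :=
    Real.isLittleO_log_id_atTop.def (by positivity)
  have h2 : ∀ᶠ s : ℝ in atTop, (2*Real.log 3 + Real.log 2)/(β/2) ≤ s := eventually_ge_atTop _
  have h3 : ∀ᶠ s : ℝ in atTop, (0:ℝ) ≤ s := eventually_ge_atTop 0
  filter_upwards [h1, h2, h3] with s hs1 hs2 hs3
  have : Real.log s ≤ (β/4) * s := by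
    calc Real.log s ≤ ‖Real.log s‖ := le_norm_self _
    _ ≤ (β/4) * ‖s‖ := hs1
    _ = (β/4) * s := by rw [Real.norm_eq_abs, abs_of_nonneg hs3]
  have h4 : 2*Real.log 3 + Real.log 2 ≤ (β/2) * s := by
    rw [div_le_iff₀ (by positivity)] at hs2; linarith
  nlinarith

lemma g_lower (δ : ℝ) (hδ : δ < 1/2) :
    ∃ A : ℝ, 2 ≤ A ∧ ∀ t, A ≤ t → t⁻¹ ≤ gf δ t := by
  set δ' := max δ 0 with hδ'
  have hδ'0 : 0 ≤ δ' := le_max_right _ _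
  have hδ'2 : δ' < 1/2 := max_lt hδ (by norm_num)
  set β := 1 - 2*δ' with hβdef
  have hβ : 0 < β := by simp [hβdef]; linarith
  have h1 := (Real.tendsto_log_atTop.eventually (step1 β hβ)).and (eventually_ge_atTop (2:ℝ))
  obtain ⟨A, hA⟩ := eventually_atTop.mp h1
  refine ⟨max A 2, le_max_right _ _, fun t ht => ?_⟩
  have ht2 : (2:ℝ) ≤ t := le_trans (le_max_right _ _) ht
  have htA : A ≤ t := le_trans (le_max_left _ _) ht
  obtain ⟨hkey, -⟩ := hA t htA
  -- hkey : 2*log 3 + log 2 + 2*log (log t) ≤ β * log t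
  have ht0 : (0:ℝ) < t := by linarith
  have hlogt : 0 < Real.log t := Real.log_pos (by linarith)
  set L := Real.log (2 + t^2) with hLdef
  have hL0 : 0 < L := hL t
  -- L ≤ log 2 + 2 log t
  have hLle : L ≤ Real.log 2 + 2 * Real.log t := by
    have : (2:ℝ) + t^2 ≤ 2 * t^2 := by nlinarith
    calc L ≤ Real.log (2 * t^2) := Real.log_le_log (by positivity) this
    _ = Real.log 2 + 2 * Real.log t := by
        rw [Real.log_mul (by norm_num) (by positivity), Real.log_pow]; push_cast; ring
  have hlog2t : Real.log 2 ≤ Real.log t := Real.log_le_log (by norm_num) ht2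
  have hL3 : L ≤ 3 * Real.log t := by linarith
  have hlogL : Real.log L ≤ Real.log 3 + Real.log (Real.log t) := by
    calc Real.log L ≤ Real.log (3 * Real.log t) := Real.log_le_log hL0 hL3
    _ = _ := Real.log_mul (by norm_num) hlogt.ne'
  -- main: 2 * Bf δ t ≤ log t
  have hmain : 2 * Bf δ t ≤ Real.log t := by
    have hδL : δ * L ≤ δ' * L := mul_le_mul_of_nonneg_right (le_max_left _ _) hL0.le
    have hδ'L : δ' * L ≤ δ' * Real.log 2 + 2 * δ' * Real.log t := by nlinarith
    have hδ'l2 : δ' * Real.log 2 ≤ Real.log 2 := by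
      nlinarith [Real.log_pos (show (1:ℝ) < 2 by norm_num)]
    have : 2 * Bf δ t = δ * L + 2 * Real.log L := by simp [Bf, ← hLdef]; ring
    rw [this]
    have : β * Real.log t = Real.log t - 2*δ'*Real.log t := by rw [hβdef]; ring
    nlinarith [hkey]
  -- conclude
  have : t⁻¹ = Real.exp (-Real.log t) := by rw [Real.exp_neg, Real.exp_log ht0]
  rw [this]
  exact Real.exp_le_exp.mpr (by linarith)

lemma contDiff_two_iff (f : ℝ → ℝ) :
    ContDiff ℝ 2 f ↔ Differentiable ℝ f ∧ ContDiff ℝ 1 (deriv f) := by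
  rw [show (2 : WithTop ℕ∞) = 1 + 1 by norm_num, contDiff_succ_iff_deriv]
  simp

theorem stmt_2 (δ : ℝ) (b : ℝ → ℝ)
    (hb : ∀ x, b x = (x / (2 + x^2)) * (δ + 2 / Real.log (2 + x^2))) :
    (∀ u : ℝ → ℝ, ContDiff ℝ 2 u → (∃ C, ∀ x, |u x| ≤ C) →
      (∀ x, (1/2 : ℝ) * deriv (deriv u) x + b x * deriv u x = 0) →
      ∃ c, ∀ x, u x = c) ↔ δ < 1/2 := by
  constructor
  · intro H
    by_contra hcon
    push_neg at hcon
    set u : ℝ → ℝ := fun x => ∫ t in (0:ℝ)..x, gf δ t with hu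
    have hgc : Continuous (gf δ) := (contDiff_g δ).continuous
    have hderiv : ∀ x, HasDerivAt u (gf δ x) x := fun x =>
      intervalIntegral.integral_hasDerivAt_right (hgc.intervalIntegrable 0 x)
        hgc.aestronglyMeasurable.stronglyMeasurableAtFilter hgc.continuousAt
    have hderiveq : deriv u = gf δ := funext fun x => (hderiv x).deriv
    have hCD : ContDiff ℝ 2 u := by
      rw [contDiff_two_iff]
      exact ⟨fun x => (hderiv x).differentiableAt, hderiveq ▸ (contDiff_g δ).of_le (by norm_num)⟩
    have hbound : ∃ C, ∀ x, |u x| ≤ C := by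
      refine ⟨2*((Real.log 2)^2)⁻¹ + (Real.log 2)⁻¹, fun x => ?_⟩
      have hnn : ∀ y : ℝ, 0 ≤ y → 0 ≤ ∫ t in (0:ℝ)..y, gf δ t := fun y hy =>
        intervalIntegral.integral_nonneg hy (fun t _ => (g_pos δ t).le)
      rcases le_or_gt 0 x with hx | hx
      · rw [hu]; rw [abs_of_nonneg (hnn x hx)]
        exact integral_g_le δ hcon x hx
      · have heven : ∀ t : ℝ, gf δ (-t) = gf δ t := fun t => by simp [gf, Bf, neg_sq]
        have hflip : ∫ t in (0:ℝ)..(-x), gf δ t = - ∫ t in (0:ℝ)..x, gf δ t := by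
          rw [show ∫ t in (0:ℝ)..(-x), gf δ t = ∫ t in (0:ℝ)..(-x), gf δ (-t) by
              exact intervalIntegral.integral_congr (fun t _ => (heven t).symm)]
          rw [intervalIntegral.integral_comp_neg (gf δ), neg_neg, neg_zero,
            intervalIntegral.integral_symm]
        have h1 : |u x| = |∫ t in (0:ℝ)..(-x), gf δ t| := by
          rw [hu, hflip]; simp
        rw [h1, abs_of_nonneg (hnn (-x) (by linarith))]
        exact integral_g_le δ hcon (-x) (by linarith)
    have hODE : ∀ x, (1/2:ℝ) * deriv (deriv u) x + b x * deriv u x = 0 := by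
      intro x
      rw [hderiveq, hb x, (hasDerivAt_g δ x).deriv]
      ring
    obtain ⟨c, hcst⟩ := H u hCD hbound hODE
    have h0 : u 0 = 0 := by simp [hu]
    have h1 : 0 < u 1 :=
      intervalIntegral.intervalIntegral_pos_of_pos (hgc.intervalIntegrable 0 1)
        (fun t => g_pos δ t) one_pos
    rw [hcst 0] at h0
    rw [hcst 1] at h1
    linarith
  · rintro hδ u hCD ⟨C, hC⟩ hODE
    have hC0 : 0 ≤ C := le_trans (abs_nonneg _) (hC 0)
    obtain ⟨hud, hv1⟩ := (contDiff_two_iff u).mp hCD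
    set v := deriv u with hv
    have hvd : Differentiable ℝ v := hv1.differentiable one_ne_zero
    have hvc : Continuous v := hvd.continuous
    have hveq : ∀ x, deriv v x =
        -2 * ((x / (2 + x^2)) * (δ + 2 / Real.log (2 + x^2))) * v x := by
      intro x
      have h1 := hODE x
      rw [hb x] at h1
      rw [hv]
      linarith
    have hderivh : ∀ x, HasDerivAt (fun x => v x * Real.exp (2 * Bf δ x)) 0 x := by
      intro x
      have h1 : HasDerivAt v (deriv v x) x := (hvd x).hasDerivAt
      have h2 : HasDerivAt (fun x => Real.exp (2 * Bf δ x))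
          (2 * ((x / (2 + x^2)) * (δ + 2 / Real.log (2 + x^2))) *
            Real.exp (2 * Bf δ x)) x := by
        have := ((hasDerivAt_B δ x).const_mul 2).exp
        convert this using 1
        ring
      have h3 := h1.mul h2
      refine h3.congr_deriv ?_
      rw [hveq x]
      ring
    have hconsteq : ∀ x, v x * Real.exp (2 * Bf δ x) = v 0 * Real.exp (2 * Bf δ 0) :=
      fun x => is_const_of_deriv_eq_zero
        (fun y => ((hderivh y).differentiableAt : DifferentiableAt ℝ _ y))
        (fun y => (hderivh y).deriv) x 0
    rcases eq_or_ne (v 0) 0 with hv0 | hv0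
    · have hvz : ∀ x, v x = 0 := by
        intro x
        have := hconsteq x
        rw [hv0, zero_mul] at this
        exact (mul_eq_zero.mp this).resolve_right (Real.exp_ne_zero _)
      exact ⟨u 0, fun x => is_const_of_deriv_eq_zero hud (fun y => hvz y) x 0⟩
    · exfalso
      set K := v 0 * Real.exp (2 * Bf δ 0) with hK
      have hKne : K ≠ 0 := mul_ne_zero hv0 (Real.exp_ne_zero _)
      have hKpos : 0 < |K| := abs_pos.mpr hKne
      have hvx : ∀ x, v x = K * gf δ x := by
        intro x
        have h1 := hconsteq x
        have h2 : Real.exp (2 * Bf δ x) ≠ 0 := Real.exp_ne_zero _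
        have : v x = K / Real.exp (2 * Bf δ x) := by
          field_simp [← h1, hK]
          exact h1
        rw [this]
        unfold gf
        rw [div_eq_mul_inv, ← Real.exp_neg]
        ring_nf
      obtain ⟨A, hA2, hAbound⟩ := g_lower δ hδ
      have hA0 : (0:ℝ) < A := by linarith
      set x := A * Real.exp (2*C/|K| + 1) with hx
      have hexp1 : (1:ℝ) ≤ Real.exp (2*C/|K| + 1) := Real.one_le_exp (by positivity)
      have hxA : A ≤ x := by nlinarith
      have hx0 : (0:ℝ) < x := by linarith
      have hgc : Continuous (gf δ) := (contDiff_g δ).continuous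
      have hftc : ∫ t in (0:ℝ)..x, v t = u x - u 0 := by
        rw [hv]
        exact intervalIntegral.integral_deriv_eq_sub (fun t _ => hud t)
          (hvc.intervalIntegrable 0 x)
      have hint : ∫ t in (0:ℝ)..x, v t = K * ∫ t in (0:ℝ)..x, gf δ t := by
        simp_rw [hvx]
        exact intervalIntegral.integral_const_mul K _
      set I := ∫ t in (0:ℝ)..x, gf δ t with hI
      have hInn : 0 ≤ I :=
        intervalIntegral.integral_nonneg hx0.le (fun t _ => (g_pos δ t).le)
      have hIlarge : 2*C/|K| + 1 ≤ I := by
        have hsplit : I = (∫ t in (0:ℝ)..A, gf δ t) + ∫ t in A..x, gf δ t :=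
          (intervalIntegral.integral_add_adjacent_intervals
            (hgc.intervalIntegrable 0 A) (hgc.intervalIntegrable A x)).symm
        have h1 : 0 ≤ ∫ t in (0:ℝ)..A, gf δ t :=
          intervalIntegral.integral_nonneg hA0.le (fun t _ => (g_pos δ t).le)
        have hinvint : IntervalIntegrable (fun t : ℝ => t⁻¹) MeasureTheory.volume A x := by
          apply ContinuousOn.intervalIntegrable
          apply ContinuousOn.inv₀ continuousOn_id
          intro t ht
          rw [Set.uIcc_of_le hxA] at ht
          exact ne_of_gt (lt_of_lt_of_le hA0 ht.1)
        have h2 : (∫ t in A..x, (fun t : ℝ => t⁻¹) t) ≤ ∫ t in A..x, gf δ t := by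
          apply intervalIntegral.integral_mono_on hxA hinvint
            (hgc.intervalIntegrable A x)
          intro t ht
          exact hAbound t ht.1
        have h3 : (∫ t in A..x, (fun t : ℝ => t⁻¹) t) = Real.log x - Real.log A := by
          rw [integral_inv_of_pos hA0 hx0, Real.log_div hx0.ne' hA0.ne']
        have h4 : Real.log x - Real.log A = 2*C/|K| + 1 := by
          rw [hx, Real.log_mul hA0.ne' (Real.exp_ne_zero _), Real.log_exp]
          ring
        rw [hsplit]
        rw [h3, h4] at h2
        linarith
      have habs : |u x - u 0| ≤ 2*C := by
        calc |u x - u 0| ≤ |u x| + |u 0| := abs_sub (u x) (u 0)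
        _ ≤ 2*C := by linarith [hC x, hC 0]
      have hKI : |K| * I ≤ 2*C := by
        calc |K| * I = |K * I| := by rw [abs_mul (K) (I), abs_of_nonneg hInn]
        _ = |u x - u 0| := by rw [← hint, hftc]
        _ ≤ 2*C := habs
      have hdiv : (2*C/|K|) * |K| = 2*C := div_mul_cancel₀ _ hKpos.ne'
      nlinarith
end

section
/- Let A and B be symmetric positive semidefinite d×d real matrices with λ I ≤ A² and λ I ≤ B² for some λ > 0 (i.e., A ≥ √λ I and B ≥ √λ I). Then ‖A − B‖² ≤ (1/(4λ))·‖A² − B²‖², where ‖·‖ denotes the Hilbert–Schmidt (Frobenius) norm. -/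
open Matrix

lemma trace_nonneg_of_psd {d : ℕ} {M : Matrix (Fin d) (Fin d) ℝ}
    (hM : M.PosSemidef) : 0 ≤ Matrix.trace M := by
  rw [Matrix.trace]
  apply Finset.sum_nonneg
  intro i _
  have := hM.dotProduct_mulVec_nonneg (Pi.single i 1)
  simpa [Matrix.mulVec_single, Matrix.diag] using this

lemma sqrt_psd {d : ℕ} {lam : ℝ} (hlam : 0 ≤ lam)
    {M : Matrix (Fin d) (Fin d) ℝ} (hM : M.PosSemidef)
    (hM2 : (M ^ 2 - lam • (1 : Matrix (Fin d) (Fin d) ℝ)).PosSemidef) :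
    (M - Real.sqrt lam • (1 : Matrix (Fin d) (Fin d) ℝ)).PosSemidef := by
  set s := Real.sqrt lam with hs
  have hH := hM.1
  have heig : ∀ i, s ≤ hH.eigenvalues i := by
    intro i
    have h1 : 0 ≤ hH.eigenvalues i := hM.eigenvalues_nonneg i
    set v : Fin d → ℝ := ⇑(hH.eigenvectorBasis i) with hv
    have hMv : M *ᵥ v = hH.eigenvalues i • v := hH.mulVec_eigenvectorBasis i
    have hvne : v ≠ 0 := by
      have := hH.eigenvectorBasis.orthonormal.ne_zero i
      intro h
      apply this
      ext j
      exact congrFun h j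
    have hvv : 0 < dotProduct v v := by
      rcases lt_or_eq_of_le (Finset.sum_nonneg (fun j _ => mul_self_nonneg (v j)) :
        (0:ℝ) ≤ dotProduct v v) with h | h
      · exact h
      · exact absurd (dotProduct_self_eq_zero.mp h.symm) hvne
    have h2 := hM2.dotProduct_mulVec_nonneg v
    have hM2v : (M ^ 2 - lam • (1 : Matrix (Fin d) (Fin d) ℝ)) *ᵥ v
        = (hH.eigenvalues i ^ 2 - lam) • v := by
      rw [Matrix.sub_mulVec, pow_two, ← Matrix.mulVec_mulVec, hMv, Matrix.mulVec_smul, hMv,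
        Matrix.smul_mulVec, Matrix.one_mulVec]
      ext j
      simp [smul_smul]
      ring
    rw [hM2v] at h2
    have h2' : 0 ≤ (hH.eigenvalues i ^ 2 - lam) * dotProduct v v := by
      simpa [dotProduct_smul, star_trivial, smul_eq_mul, dotProduct,
        Finset.mul_sum, mul_comm, mul_left_comm] using h2
    have h3 : lam ≤ hH.eigenvalues i ^ 2 := by nlinarith
    calc s ≤ Real.sqrt (hH.eigenvalues i ^ 2) := Real.sqrt_le_sqrt h3
      _ = hH.eigenvalues i := by rw [Real.sqrt_sq h1]
  have key : M - s • (1 : Matrix (Fin d) (Fin d) ℝ)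
      = (hH.eigenvectorUnitary : Matrix (Fin d) (Fin d) ℝ)
        * diagonal (fun i => hH.eigenvalues i - s)
        * (hH.eigenvectorUnitary : Matrix (Fin d) (Fin d) ℝ)ᴴ := by
    have hU : (hH.eigenvectorUnitary : Matrix (Fin d) (Fin d) ℝ)
        * (hH.eigenvectorUnitary : Matrix (Fin d) (Fin d) ℝ)ᴴ = 1 :=
      Matrix.mem_unitaryGroup_iff.mp hH.eigenvectorUnitary.2
    have hdiag : diagonal (fun i => hH.eigenvalues i - s)
        = diagonal (RCLike.ofReal ∘ hH.eigenvalues) - s • (1 : Matrix (Fin d) (Fin d) ℝ) := by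
      rw [Matrix.smul_one_eq_diagonal, ← Matrix.diagonal_sub]
      rfl
    rw [hdiag, Matrix.mul_sub, Matrix.sub_mul, Matrix.mul_smul, Matrix.smul_mul,
      Matrix.mul_one, hU, ← Matrix.star_eq_conjTranspose]
    exact congrArg (· - s • 1) hH.spectral_theorem
  rw [key]
  exact (Matrix.PosSemidef.diagonal (fun i => sub_nonneg.mpr (heig i))).mul_mul_conjTranspose_same _

theorem stmt_5 (d : ℕ) (lam : ℝ) (hlam : 0 < lam)
    (A B : Matrix (Fin d) (Fin d) ℝ)
    (hA : A.PosSemidef) (hB : B.PosSemidef)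
    (hA2 : (A ^ 2 - lam • (1 : Matrix (Fin d) (Fin d) ℝ)).PosSemidef)
    (hB2 : (B ^ 2 - lam • (1 : Matrix (Fin d) (Fin d) ℝ)).PosSemidef) :
    Matrix.trace ((A - B)ᵀ * (A - B)) ≤
      (1 / (4 * lam)) * Matrix.trace ((A ^ 2 - B ^ 2)ᵀ * (A ^ 2 - B ^ 2)) := by
  set s := Real.sqrt lam with hsdef
  have hs : 0 < s := Real.sqrt_pos.mpr hlam
  have hs2 : s ^ 2 = lam := Real.sq_sqrt hlam.le
  set C := A - B with hC
  set D := A ^ 2 - B ^ 2 with hD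
  have hCt : Cᵀ = C := by
    have ha : Aᵀ = A := by
      have := hA.1
      rwa [Matrix.IsHermitian, Matrix.conjTranspose_eq_transpose_of_trivial] at this
    have hb : Bᵀ = B := by
      have := hB.1
      rwa [Matrix.IsHermitian, Matrix.conjTranspose_eq_transpose_of_trivial] at this
    rw [hC, Matrix.transpose_sub, ha, hb]
  have hAs := sqrt_psd hlam.le hA hA2
  have hBs := sqrt_psd hlam.le hB hB2
  have hDdecomp : D = A * C + C * B := by
    rw [hC, hD]; noncomm_ring
  clear_value C D
  -- trace (Cᵀ (A - s) C) ≥ 0 and same for B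
  have t1 : 0 ≤ Matrix.trace (Cᵀ * (A - s • 1) * C) := by
    apply trace_nonneg_of_psd
    have := hAs.conjTranspose_mul_mul_same C
    rwa [Matrix.conjTranspose_eq_transpose_of_trivial] at this
  have t2 : 0 ≤ Matrix.trace (Cᵀ * (B - s • 1) * C) := by
    apply trace_nonneg_of_psd
    have := hBs.conjTranspose_mul_mul_same C
    rwa [Matrix.conjTranspose_eq_transpose_of_trivial] at this
  have e1 : Matrix.trace (Cᵀ * (A - s • 1) * C)
      = Matrix.trace (Cᵀ * A * C) - s * Matrix.trace (Cᵀ * C) := by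
    simp only [Matrix.mul_sub, Matrix.sub_mul, Matrix.mul_smul, Matrix.smul_mul,
      Matrix.mul_one, Matrix.trace_sub, Matrix.trace_smul, smul_eq_mul]
    try ring
  have e2 : Matrix.trace (Cᵀ * (B - s • 1) * C)
      = Matrix.trace (Cᵀ * B * C) - s * Matrix.trace (Cᵀ * C) := by
    simp only [Matrix.mul_sub, Matrix.sub_mul, Matrix.mul_smul, Matrix.smul_mul,
      Matrix.mul_one, Matrix.trace_sub, Matrix.trace_smul, smul_eq_mul]
    try ring
  have e3 : Matrix.trace (Cᵀ * D)
      = Matrix.trace (Cᵀ * A * C) + Matrix.trace (Cᵀ * B * C) := by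
    rw [hDdecomp, Matrix.mul_add, Matrix.trace_add]
    congr 1
    · rw [← Matrix.mul_assoc]
    · rw [hCt, Matrix.trace_mul_comm C (C * B)]
  have hmain : 2 * s * Matrix.trace (Cᵀ * C) ≤ Matrix.trace (Cᵀ * D) := by
    rw [e3]
    nlinarith [t1, t2, e1, e2]
  -- Cauchy-Schwarz via completing the square
  have h0 : 0 ≤ Matrix.trace ((D - (2 * s) • C)ᵀ * (D - (2 * s) • C)) := by
    apply trace_nonneg_of_psd
    have := Matrix.posSemidef_conjTranspose_mul_self (D - (2 * s) • C)
    rwa [Matrix.conjTranspose_eq_transpose_of_trivial] at this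
  have hDC : Matrix.trace (Dᵀ * C) = Matrix.trace (Cᵀ * D) := by
    rw [← Matrix.trace_transpose (Dᵀ * C), Matrix.transpose_mul, Matrix.transpose_transpose]
  have hexp : Matrix.trace ((D - (2 * s) • C)ᵀ * (D - (2 * s) • C))
      = Matrix.trace (Dᵀ * D) - 4 * s * Matrix.trace (Cᵀ * D)
        + 4 * s ^ 2 * Matrix.trace (Cᵀ * C) := by
    simp only [Matrix.transpose_sub, Matrix.transpose_smul, Matrix.sub_mul, Matrix.mul_sub,
      Matrix.smul_mul, Matrix.mul_smul, Matrix.trace_sub, Matrix.trace_smul, smul_eq_mul,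
      smul_smul]
    rw [hDC]
    ring
  have hCC : 0 ≤ Matrix.trace (Cᵀ * C) := by
    apply trace_nonneg_of_psd
    have := Matrix.posSemidef_conjTranspose_mul_self C
    rwa [Matrix.conjTranspose_eq_transpose_of_trivial] at this
  rw [hexp] at h0
  rw [div_mul_eq_mul_div, one_mul, le_div_iff₀ (by positivity)]
  nlinarith [hmain, h0, hCC, hs2, hs]
end

section
/- Suppose σ : ℝ^d → (symmetric d×d matrices) and b : ℝ^d → ℝ^d satisfy: ‖σ(x)−σ(y)‖² + 2⟨x−y, b(x)−b(y)⟩ ≤ ω(|x−y|) for all x,y with ∫₀^{s₀} ω(s)/s ds < ∞, and ‖σ(x)−σ(y)‖² + 2⟨x−y, b(x)−b(y)⟩ ≤ s₂ < 4μ for |x−y| ≥ s₀. Then with g(s) := (ω(s)/s)1_{(0,s₀]} + (s₂/s)1_{(s₀,∞)} one has ‖σ(x)−σ(y)‖² + 2⟨x−y,b(x)−b(y)⟩ ≤ |x−y| g(|x−y|) for all x ≠ y, and ∫₀^∞ exp(−(1/(4μ))∫₀^r g(s)ds) dr = ∞. -/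
open MeasureTheory Set Real

theorem stmt_19 (d : ℕ) (μ s₀ s₂ : ℝ) (hμ : 0 < μ) (hs₀ : 0 < s₀)
    (hs₂ : 0 ≤ s₂) (hs₂4 : s₂ < 4 * μ)
    (σ : EuclideanSpace ℝ (Fin d) → Matrix (Fin d) (Fin d) ℝ)
    (hσs : ∀ x, (σ x).IsSymm)
    (b : EuclideanSpace ℝ (Fin d) → EuclideanSpace ℝ (Fin d))
    (ω : ℝ → ℝ) (hωnn : ∀ s, 0 < s → 0 ≤ ω s)
    (hint : MeasureTheory.IntegrableOn (fun s => ω s / s) (Set.Ioc 0 s₀))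
    (h1 : ∀ x y, (∑ i, ∑ j, (σ x i j - σ y i j) ^ 2)
        + 2 * (inner ℝ (x - y) (b x - b y) : ℝ) ≤ ω (dist x y))
    (h2 : ∀ x y, s₀ ≤ dist x y →
      (∑ i, ∑ j, (σ x i j - σ y i j) ^ 2)
        + 2 * (inner ℝ (x - y) (b x - b y) : ℝ) ≤ s₂)
    (g : ℝ → ℝ)
    (hg : ∀ s, g s = if s ∈ Set.Ioc (0:ℝ) s₀ then ω s / s
      else if s₀ < s then s₂ / s else 0) :
    (∀ x y, x ≠ y →
      (∑ i, ∑ j, (σ x i j - σ y i j) ^ 2)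
        + 2 * (inner ℝ (x - y) (b x - b y) : ℝ) ≤ dist x y * g (dist x y)) ∧
    ∫⁻ r in Set.Ioi (0:ℝ),
      ENNReal.ofReal (Real.exp (-(1 / (4 * μ)) * ∫ s in (0:ℝ)..r, g s)) = ⊤ := by
  have h4μ : (0:ℝ) < 4 * μ := by linarith
  constructor
  · intro x y hxy
    have hd : 0 < dist x y := dist_pos.mpr hxy
    rcases le_or_gt (dist x y) s₀ with hle | hlt
    · have hgd : g (dist x y) = ω (dist x y) / dist x y := by
        rw [hg]; rw [if_pos ⟨hd, hle⟩]
      have : dist x y * g (dist x y) = ω (dist x y) := by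
        rw [hgd]; field_simp
      rw [this]; exact h1 x y
    · have hgd : g (dist x y) = s₂ / dist x y := by
        rw [hg, if_neg (by simp [Set.mem_Ioc, not_le.mpr hlt]), if_pos hlt]
      have : dist x y * g (dist x y) = s₂ := by
        rw [hgd]; field_simp
      rw [this]; exact h2 x y hlt.le
  · set α : ℝ := s₂ / (4 * μ) with hα_def
    have hα0 : 0 ≤ α := div_nonneg hs₂ h4μ.le
    have hα1 : α < 1 := (div_lt_one h4μ).mpr hs₂4
    set C : ℝ := ∫ s in Set.Ioc (0:ℝ) s₀, ω s / s with hC_def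
    set K : ℝ := Real.exp (-(1 / (4 * μ)) * C) * s₀ ^ α with hK_def
    have hKpos : 0 < K := mul_pos (Real.exp_pos _) (Real.rpow_pos_of_pos hs₀ _)
    -- integrability of g on the two pieces
    have hgIoc : MeasureTheory.IntegrableOn g (Set.Ioc 0 s₀) := by
      refine hint.congr_fun (fun s hs => ?_) measurableSet_Ioc
      rw [hg s, if_pos hs]
    have hI1 : IntervalIntegrable g MeasureTheory.volume 0 s₀ :=
      (intervalIntegrable_iff_integrableOn_Ioc_of_le hs₀.le).mpr hgIoc
    have hgtail : ∀ s : ℝ, s₀ < s → g s = s₂ / s := by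
      intro s hs
      rw [hg s, if_neg (by simp [Set.mem_Ioc, not_le.mpr hs]), if_pos hs]
    have hI2 : ∀ r, s₀ < r → IntervalIntegrable g MeasureTheory.volume s₀ r := by
      intro r hr
      refine (intervalIntegrable_iff_integrableOn_Ioc_of_le hr.le).mpr ?_
      have hcont : ContinuousOn (fun s : ℝ => s₂ / s) (Set.Icc s₀ r) :=
        ContinuousOn.div continuousOn_const continuousOn_id
          (fun x hx => ne_of_gt (hs₀.trans_le hx.1))
      have : MeasureTheory.IntegrableOn (fun s : ℝ => s₂ / s) (Set.Ioc s₀ r) :=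
        hcont.integrableOn_Icc.mono_set Set.Ioc_subset_Icc_self
      exact this.congr_fun (fun s hs => (hgtail s hs.1).symm) measurableSet_Ioc
    -- value of the integral for r > s₀
    have hval : ∀ r : ℝ, s₀ < r →
        (∫ s in (0:ℝ)..r, g s) = C + s₂ * (Real.log r - Real.log s₀) := by
      intro r hr
      rw [← intervalIntegral.integral_add_adjacent_intervals (hI1) (hI2 r hr)]
      have e1 : (∫ s in (0:ℝ)..s₀, g s) = C := by
        rw [intervalIntegral.integral_of_le hs₀.le, hC_def]
        exact setIntegral_congr_fun measurableSet_Ioc (fun s hs => by rw [hg s, if_pos hs])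
      have e2 : (∫ s in s₀..r, g s) = s₂ * (Real.log r - Real.log s₀) := by
        rw [intervalIntegral.integral_of_le hr.le,
          setIntegral_congr_fun measurableSet_Ioc
            (fun s hs => by rw [hgtail s hs.1, div_eq_mul_inv] :
              Set.EqOn g (fun s : ℝ => s₂ * s⁻¹) (Set.Ioc s₀ r)),
          ← intervalIntegral.integral_of_le hr.le,
          intervalIntegral.integral_const_mul, integral_inv_of_pos hs₀ (hs₀.trans hr),
          Real.log_div (hs₀.trans hr).ne' hs₀.ne']
      rw [e1, e2]
    -- pointwise form of the integrand for r > s₀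
    have key : ∀ r : ℝ, r ∈ Set.Ioi s₀ →
        Real.exp (-(1 / (4 * μ)) * ∫ s in (0:ℝ)..r, g s) = K * r ^ (-α) := by
      intro r hr
      have hrpos : 0 < r := hs₀.trans hr
      rw [hval r hr]
      have : -(1 / (4 * μ)) * (C + s₂ * (Real.log r - Real.log s₀))
          = -(1 / (4 * μ)) * C + (Real.log s₀ * α + Real.log r * (-α)) := by
        rw [hα_def]; field_simp; ring
      rw [this, Real.exp_add, Real.exp_add, hK_def,
        Real.rpow_def_of_pos hs₀, Real.rpow_def_of_pos hrpos, mul_assoc]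
    -- the lintegral over (s₀, ∞) of K * r ^ (-α) is infinite
    have hrpow_top : ∫⁻ r in Set.Ioi s₀, ENNReal.ofReal (r ^ (-α)) = ⊤ := by
      by_contra h
      have hlt : ∫⁻ r in Set.Ioi s₀, ENNReal.ofReal (r ^ (-α)) < ⊤ :=
        lt_top_iff_ne_top.mpr h
      have hmeas : MeasureTheory.AEStronglyMeasurable (fun r : ℝ => r ^ (-α))
          (MeasureTheory.volume.restrict (Set.Ioi s₀)) :=
        (continuousOn_id.rpow_const (fun x hx => Or.inl (hs₀.trans hx).ne')).aestronglyMeasurable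
          measurableSet_Ioi
      have hnn : 0 ≤ᵐ[MeasureTheory.volume.restrict (Set.Ioi s₀)]
          fun r : ℝ => r ^ (-α) := by
        filter_upwards [ae_restrict_mem measurableSet_Ioi] with x hx
        exact Real.rpow_nonneg (hs₀.trans hx).le _
      have hInt : MeasureTheory.IntegrableOn (fun r : ℝ => r ^ (-α)) (Set.Ioi s₀) :=
        ⟨hmeas, (hasFiniteIntegral_iff_ofReal hnn).mpr hlt⟩
      rw [integrableOn_Ioi_rpow_iff hs₀] at hInt
      linarith
    -- conclude
    have hIoi : ∫⁻ r in Set.Ioi s₀,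
        ENNReal.ofReal (Real.exp (-(1 / (4 * μ)) * ∫ s in (0:ℝ)..r, g s)) = ⊤ := by
      rw [setLIntegral_congr_fun measurableSet_Ioi
        (fun r hr => by rw [key r hr])]
      have : ∀ r : ℝ, ENNReal.ofReal (K * r ^ (-α))
          = ENNReal.ofReal K * ENNReal.ofReal (r ^ (-α)) := fun r =>
        ENNReal.ofReal_mul hKpos.le
      simp_rw [this]
      rw [lintegral_const_mul' _ _ ENNReal.ofReal_ne_top, hrpow_top,
        ENNReal.mul_top (ENNReal.ofReal_pos.mpr hKpos).ne']
    refine top_le_iff.mp ?_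
    calc (⊤ : ENNReal) = _ := hIoi.symm
      _ ≤ _ := lintegral_mono_set (Set.Ioi_subset_Ioi hs₀.le)
end
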